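/- arXiv:2305.10867 — 2 statements merged into one kernel-verified Lean document; each statement's English description precedes it below -/
import Mathlib

section
/- Fix m ≥ 3 and n ≥ 361, and let statistical distances satisfy: for each of √n independent row-wise IKOS instances the distance between views on equal-sum inputs is at most 2^{−σ₁} with σ₁ = (m−1)(log₂(n)/2 − log₂ e) − log₂ q, and the column-wise instance has distance at most 2^{−σ₂} with σ₂ = (m√n−1)(log₂(n)/2 − log₂ e) − log₂ q. Then the total variation distance between the full views is at most 2^{−σ} with σ = (m−2)(log₂(n)/2 − log₂ e) − log₂ q − 2. -/
/-- Numerical inequality in the IKOS security proof: for `m ≥ 3`, `n ≥ 361`, `q ≥ 1`, with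
`σ₁ = (m-1)(log₂(n)/2 - log₂ e) - log₂ q`, `σ₂ = (m√n - 1)(log₂(n)/2 - log₂ e) - log₂ q`, and
`σ = (m-2)(log₂(n)/2 - log₂ e) - log₂ q - 2`, we have `√n · 2^{-σ₁} + 2^{-σ₂} ≤ 2^{-σ}`. -/
theorem ikos_numerical_inequality (m n : ℕ) (q : ℝ) (hm : 3 ≤ m) (hn : 361 ≤ n) (hq : 1 ≤ q) :
    let L : ℝ := Real.logb 2 n / 2 - Real.logb 2 (Real.exp 1)
    let σ₁ : ℝ := ((m : ℝ) - 1) * L - Real.logb 2 q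
    let σ₂ : ℝ := ((m : ℝ) * Real.sqrt n - 1) * L - Real.logb 2 q
    let σ : ℝ := ((m : ℝ) - 2) * L - Real.logb 2 q - 2
    Real.sqrt n * (2 : ℝ) ^ (-σ₁) + (2 : ℝ) ^ (-σ₂) ≤ (2 : ℝ) ^ (-σ) := by
  intro L σ₁ σ₂ σ
  have hn0 : (0:ℝ) < n := by positivity -- wrong if n could be 0 but n ≥ 361
  have hs19 : (19:ℝ) ≤ Real.sqrt n := by
    have : Real.sqrt 361 ≤ Real.sqrt n := Real.sqrt_le_sqrt (by exact_mod_cast hn)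
    rwa [show (361:ℝ) = 19^2 by norm_num, Real.sqrt_sq (by norm_num)] at this
  have hs0 : (0:ℝ) < Real.sqrt n := by linarith
  -- logb 2 n / 2 = logb 2 √n
  have hhalf : Real.logb 2 n / 2 = Real.logb 2 (Real.sqrt n) := by
    rw [Real.logb, Real.logb, Real.log_sqrt (le_of_lt hn0)]
    ring
  -- 2^{-L} = e / √n
  have h2L : (2:ℝ) ^ (-L) = Real.exp 1 / Real.sqrt n := by
    have : -L = Real.logb 2 (Real.exp 1) - Real.logb 2 (Real.sqrt n) := by
      simp only [L, hhalf]; ring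
    rw [this, Real.rpow_sub (by norm_num),
      Real.rpow_logb (by norm_num) (by norm_num) (Real.exp_pos 1),
      Real.rpow_logb (by norm_num) (by norm_num) hs0]
  -- L ≥ 0
  have hL0 : 0 ≤ L := by
    have he : Real.exp 1 ≤ Real.sqrt n := le_trans (by
      have := Real.exp_one_lt_d9; linarith) hs19
    have : Real.logb 2 (Real.exp 1) ≤ Real.logb 2 (Real.sqrt n) :=
      Real.logb_le_logb_of_le (by norm_num) (Real.exp_pos 1) he
    simp only [L, hhalf]; linarith
  -- first term
  have h1 : -σ₁ = -σ + (-L + -2) := by simp only [σ₁, σ, L]; ring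
  have hfirst : Real.sqrt n * (2:ℝ) ^ (-σ₁) = (2:ℝ) ^ (-σ) * (Real.exp 1 / 4) := by
    rw [h1, Real.rpow_add (by norm_num), Real.rpow_add (by norm_num), h2L]
    rw [show ((2:ℝ) ^ (-2:ℝ)) = 1/4 by
      rw [show (-2:ℝ) = ((-2:ℤ):ℝ) by norm_num, Real.rpow_intCast]; norm_num]
    field_simp
  -- second term
  have hsecond : (2:ℝ) ^ (-σ₂) ≤ (2:ℝ) ^ (-σ) * (1/4) := by
    have hσ : -σ₂ ≤ -σ + (-2) := by
      simp only [σ₂, σ]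
      have hm3 : (3:ℝ) ≤ (m:ℝ) := by exact_mod_cast hm
      have : ((m:ℝ) - 2) * L ≤ ((m:ℝ) * Real.sqrt n - 1) * L := by
        apply mul_le_mul_of_nonneg_right _ hL0
        nlinarith
      linarith
    calc (2:ℝ) ^ (-σ₂) ≤ (2:ℝ) ^ (-σ + (-2)) :=
          Real.rpow_le_rpow_of_exponent_le (by norm_num) hσ
      _ = (2:ℝ) ^ (-σ) * (2:ℝ) ^ (-2:ℝ) := Real.rpow_add (by norm_num) _ _
      _ = (2:ℝ) ^ (-σ) * (1/4) := by
          rw [show ((2:ℝ) ^ (-2:ℝ)) = 1/4 by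
            rw [show (-2:ℝ) = ((-2:ℤ):ℝ) by norm_num, Real.rpow_intCast]; norm_num]
  have hE : Real.exp 1 / 4 + 1/4 ≤ 1 := by
    have := Real.exp_one_lt_d9; linarith
  have hpos : (0:ℝ) < (2:ℝ) ^ (-σ) := Real.rpow_pos_of_pos (by norm_num) _
  calc Real.sqrt n * (2:ℝ) ^ (-σ₁) + (2:ℝ) ^ (-σ₂)
      ≤ (2:ℝ) ^ (-σ) * (Real.exp 1 / 4) + (2:ℝ) ^ (-σ) * (1/4) := by
        rw [hfirst]; linarith
    _ = (2:ℝ) ^ (-σ) * (Real.exp 1 / 4 + 1/4) := by ring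
    _ ≤ (2:ℝ) ^ (-σ) * 1 := by nlinarith
    _ = (2:ℝ) ^ (-σ) := mul_one _
end

section
/- Verifiable decryption soundness: over a group G of prime order p with generator g, suppose a prover commits to A = g^ρ and values (v_i, B_i) and, after receiving a uniformly random challenge u ∈ ℤ_p, responds with e such that A·(g^{s})^{u} = g^{e} and B_i·v_i^{u} = h_i^{e} for all i, where g^s is a public commitment to the prover's key share s. If for some i, v_i ≠ h_i^{s}, then at most one value of u ∈ ℤ_p makes both checks pass; hence the prover succeeds with probability at most 1/p over the choice of u. -/
/-!
Taking discrete logarithms to base `g` identifies `G` with `ℤ_p`, and turns the two checks into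
`ρ + u s = e` and `b + u β = η e`, where `ρ, b, β, η` are the logarithms of `A, B, v, h`.
Eliminating `e` gives `(β - η s) u = η ρ - b`, and `v ≠ h^s` says exactly that `β ≠ η s`, so this
linear equation over the field `ℤ_p` has at most one solution `u`.
-/

open Subgroup

section DiscreteLog

variable {G : Type*} [Group G] {g : G} (hg : ∀ x, x ∈ zpowers g) {n : ℕ} (hn : Nat.card G = n)

noncomputable def discreteLog (x : G) : ZMod n :=
  ((zmodMulEquivOfGenerator hg hn).symm x).toAdd

theorem discreteLog_mul (x y : G) :
    discreteLog hg hn (x * y) = discreteLog hg hn x + discreteLog hg hn y := by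
  simp [discreteLog]

theorem discreteLog_pow (x : G) (k : ℕ) : discreteLog hg hn (x ^ k) = k * discreteLog hg hn x := by
  simp [discreteLog, nsmul_eq_mul]

theorem discreteLog_generator : discreteLog hg hn g = 1 := by
  simp [discreteLog]

theorem discreteLog_injective : Function.Injective (discreteLog hg hn) :=
  Multiplicative.toAdd.injective.comp (zmodMulEquivOfGenerator hg hn).symm.injective

theorem sub_mul_challenge_eq_of_checks [NeZero n] {h A v B : G} {s u e : ZMod n}
    (hA : A * (g ^ s.val) ^ u.val = g ^ e.val) (hB : B * v ^ u.val = h ^ e.val) :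
    (discreteLog hg hn v - s * discreteLog hg hn h) * u =
      discreteLog hg hn A * discreteLog hg hn h - discreteLog hg hn B := by
  have hA' := congrArg (discreteLog hg hn) hA
  have hB' := congrArg (discreteLog hg hn) hB
  simp only [discreteLog_mul, discreteLog_pow, discreteLog_generator,
    ZMod.natCast_zmod_val] at hA' hB'
  linear_combination hB' - discreteLog hg hn h * hA'

end DiscreteLog

theorem PMF.toOuterMeasure_uniformOfFintype_le_of_subsingleton {α : Type*} [Fintype α]
    [Nonempty α] {S : Set α} (hS : S.Subsingleton) :
    (uniformOfFintype α).toOuterMeasure S ≤ (Fintype.card α : ENNReal)⁻¹ := by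
  classical
  have hcard : Fintype.card S ≤ 1 := Fintype.card_le_one_iff_subsingleton.2 hS.coe_sort
  rw [toOuterMeasure_uniformOfFintype_apply, ← one_div]
  gcongr
  exact_mod_cast hcard

def acceptingChallenges {G : Type*} [Group G] {p : ℕ} (g h A v B : G) (s : ZMod p) :
    Set (ZMod p) :=
  {u | ∃ e : ZMod p, A * (g ^ s.val) ^ u.val = g ^ e.val ∧ B * v ^ u.val = h ^ e.val}

theorem acceptingChallenges_subsingleton {G : Type*} [Group G] {g : G}
    (hg : ∀ x, x ∈ zpowers g) {p : ℕ} [Fact p.Prime] (hp : Nat.card G = p) {h A v B : G}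
    {s : ZMod p} (hv : v ≠ h ^ s.val) : (acceptingChallenges g h A v B s).Subsingleton := by
  have hslope : discreteLog hg hp v - s * discreteLog hg hp h ≠ 0 := by
    rw [sub_ne_zero, ← ZMod.natCast_zmod_val s, ← discreteLog_pow]
    exact (discreteLog_injective hg hp).ne hv
  rintro u₁ ⟨e₁, hA₁, hB₁⟩ u₂ ⟨e₂, hA₂, hB₂⟩
  refine mul_left_cancel₀ hslope ?_
  rw [sub_mul_challenge_eq_of_checks hg hp hA₁ hB₁, sub_mul_challenge_eq_of_checks hg hp hA₂ hB₂]

/-- Soundness of the verifiable-decryption proof: in a group `G` of prime order `p` generated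
by `g`, suppose the prover fixes `A`, `v`, `B` (and the public commitment `g^s` to its key
share `s`) before seeing the challenge `u`, and a response `e` passes both checks
`A·(g^s)^u = g^e` and `B·v^u = h^e`. If `v ≠ h^s`, then at most one challenge `u ∈ ℤ_p` admits
a passing response; hence the prover succeeds with probability at most `1/p` over a uniformly
random challenge. -/
theorem verifiable_decryption_soundness {G : Type*} [CommGroup G] [Fintype G]
    (p : ℕ) [Fact p.Prime] (hcard : Fintype.card G = p)
    (g : G) (hg : ∀ x : G, x ∈ Subgroup.zpowers g)
    (h A v B : G) (s : ZMod p) (hv : v ≠ h ^ s.val) :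
    Nat.card {u : ZMod p // ∃ e : ZMod p,
        A * (g ^ s.val) ^ u.val = g ^ e.val ∧ B * v ^ u.val = h ^ e.val} ≤ 1 ∧
    (PMF.uniformOfFintype (ZMod p)).toOuterMeasure
        {u : ZMod p | ∃ e : ZMod p,
          A * (g ^ s.val) ^ u.val = g ^ e.val ∧ B * v ^ u.val = h ^ e.val} ≤ (p : ENNReal)⁻¹ := by
  have hS : (acceptingChallenges g h A v B s).Subsingleton :=
    acceptingChallenges_subsingleton hg (Nat.card_eq_fintype_card.trans hcard) hv
  refine ⟨Finite.card_le_one_iff_subsingleton.2 hS.coe_sort, ?_⟩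
  have hμ := PMF.toOuterMeasure_uniformOfFintype_le_of_subsingleton hS
  rwa [ZMod.card] at hμ
end
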